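/- Fix integers N ≥ 1 and T ≥ 1, constants G > 0, σ_φ > 0, ω > 0, γ ∈ (0,1), and nonincreasing nonnegative sequences α, E : ℕ → ℝ. For each t ≥ 0 let P(t) be an N×N doubly stochastic matrix with nonnegative entries, and for 0 ≤ s ≤ t define the transition matrices P(t, s) = P(t)P(t−1)⋯P(s), with P(t, t+1) = I_N; assume |[P(m, s)]_{ij} − 1/N| ≤ ω·γ^{m−s} for all m ≥ s ≥ 0 and all i, j. Let d_j(s) ∈ ℝ^n (1 ≤ j ≤ N, s ≥ 0) satisfy ‖d_j(s)‖ ≤ Gα(s)/σ_φ + 3N·E(s), let x_j(0) ∈ ℝ^n be arbitrary, and define, for t ≥ 1, x_i(t) = Σ_{s=1}^{t} Σ_{j=1}^{N} [P(t−1, s)]_{ij} d_j(s−1) + Σ_{j=1}^{N} [P(t−1, 0)]_{ij} x_j(0), and x̄(t) = (1/N)Σ_{i=1}^{N} x_i(t). Then, with A = Σ_{j=1}^{N}‖x_j(0)‖ and B = 2N + N²ω/(1−γ): (i) Σ_{t=1}^{T} Σ_{i=1}^{N} ‖x_i(t) − x̄(t)‖ ≤ (Nω/(1−γ))·A + B·Σ_{t=0}^{T}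 (Gα(t)/σ_φ + 3N·E(t)); and (ii) for every j ∈ {1,…,N}, Σ_{t=1}^{T} Σ_{i=1}^{N} ‖x_i(t) − x_j(t)‖ ≤ (2Nω/(1−γ))·A + 2B·Σ_{t=0}^{T} (Gα(t)/σ_φ + 3N·E(t)). -/

import Mathlib

open scoped RealInnerProductSpace BigOperators

/-- The transition matrix `P(t, s) = P(t) * P(t-1) * ⋯ * P(s)` (equal to the
identity when `s = t + 1`). -/
def transMat {N : ℕ} (P : ℕ → Matrix (Fin N) (Fin N) ℝ) (t s : ℕ) :
    Matrix (Fin N) (Fin N) ℝ :=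
  ((List.range (t + 1 - s)).map fun k => P (t - k)).prod

/-- A product of matrices each of whose column sums are all `1` has column sums `1`. -/
lemma list_prod_colsum {N : ℕ} (l : List (Matrix (Fin N) (Fin N) ℝ))
    (h : ∀ M ∈ l, ∀ j, ∑ i, M i j = 1) : ∀ j, ∑ i, l.prod i j = 1 := by
  induction l with
  | nil => intro j; simp [Matrix.one_apply]
  | cons a l ih =>
    intro j
    have ihl := ih (fun M hM => h M (List.mem_cons_of_mem a hM))
    have ha : ∀ k, ∑ i, a i k = 1 := fun k => h a (List.mem_cons_self) k
    simp only [List.prod_cons, Matrix.mul_apply]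
    rw [Finset.sum_comm]
    calc ∑ k, ∑ i, a i k * l.prod k j
        = ∑ k, (∑ i, a i k) * l.prod k j := by simp [Finset.sum_mul]
      _ = ∑ k, l.prod k j := by simp [ha]
      _ = 1 := ihl j

lemma transMat_colsum {N : ℕ} (P : ℕ → Matrix (Fin N) (Fin N) ℝ)
    (hPcol : ∀ t j, ∑ i, P t i j = 1) (m s j : ℕ → ℕ → Prop) : True := trivial

/-- Geometric sum bound. -/
lemma geom_sum_le_aux {γ : ℝ} (hγ0 : 0 < γ) (hγ1 : γ < 1) (m : ℕ) :
    ∑ k ∈ Finset.range m, γ ^ k ≤ 1 / (1 - γ) := by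
  have h1γ : 0 < 1 - γ := by linarith
  rw [le_div_iff₀ h1γ]
  have := geom_sum_mul γ m
  have hpow : 0 ≤ γ ^ m := le_of_lt (pow_pos hγ0 m)
  nlinarith [this]

/-- Lemma 13: consensus bound for the iterates of Algorithm 1. -/
theorem consensus_bound
    {n : ℕ} (N T : ℕ) (hN : 1 ≤ N) (hT : 1 ≤ T)
    (G σ ω : ℝ) (hG : 0 < G) (hσ : 0 < σ) (hω : 0 < ω)
    (γ : ℝ) (hγ : γ ∈ Set.Ioo (0 : ℝ) 1)
    (α E : ℕ → ℝ) (hα0 : ∀ t, 0 ≤ α t) (hE0 : ∀ t, 0 ≤ E t)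
    (hαmono : Antitone α) (hEmono : Antitone E)
    (P : ℕ → Matrix (Fin N) (Fin N) ℝ)
    (hPnonneg : ∀ t i j, 0 ≤ P t i j)
    (hProw : ∀ t i, ∑ j, P t i j = 1)
    (hPcol : ∀ t j, ∑ i, P t i j = 1)
    (hPdecay : ∀ m s : ℕ, s ≤ m → ∀ i j,
      |transMat P m s i j - 1 / N| ≤ ω * γ ^ (m - s))
    (d : Fin N → ℕ → EuclideanSpace ℝ (Fin n))
    (hd : ∀ j s, ‖d j s‖ ≤ G * α s / σ + 3 * N * E s)
    (x : Fin N → ℕ → EuclideanSpace ℝ (Fin n))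
    (hx : ∀ i : Fin N, ∀ t : ℕ, 1 ≤ t →
      x i t = (∑ s ∈ Finset.Icc 1 t, ∑ j, transMat P (t - 1) s i j • d j (s - 1))
        + ∑ j, transMat P (t - 1) 0 i j • x j 0)
    (xbar : ℕ → EuclideanSpace ℝ (Fin n))
    (hxbar : ∀ t, xbar t = (1 / (N : ℝ)) • ∑ i, x i t)
    (A B : ℝ)
    (hA : A = ∑ j, ‖x j 0‖)
    (hB : B = 2 * N + N ^ 2 * ω / (1 - γ)) :
    (∑ t ∈ Finset.Icc 1 T, ∑ i, ‖x i t - xbar t‖ ≤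
        (N * ω / (1 - γ)) * A
          + B * ∑ t ∈ Finset.range (T + 1), (G * α t / σ + 3 * N * E t)) ∧
      ∀ j : Fin N,
        ∑ t ∈ Finset.Icc 1 T, ∑ i, ‖x i t - x j t‖ ≤
          (2 * N * ω / (1 - γ)) * A
            + 2 * B * ∑ t ∈ Finset.range (T + 1), (G * α t / σ + 3 * N * E t) := by
  obtain ⟨hγ0, hγ1⟩ := hγ
  have h1γ : (0:ℝ) < 1 - γ := by linarith
  have hNR : (1:ℝ) ≤ (N:ℝ) := by exact_mod_cast hN
  have hNpos : (0:ℝ) < (N:ℝ) := by linarith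
  set D : ℕ → ℝ := fun s => G * α s / σ + 3 * N * E s with hDdef
  have hD0 : ∀ s, 0 ≤ D s := by
    intro s
    have h1 : 0 ≤ G * α s / σ := div_nonneg (mul_nonneg hG.le (hα0 s)) hσ.le
    have h2 : 0 ≤ 3 * (N:ℝ) * E s := mul_nonneg (by positivity) (hE0 s)
    simpa [hDdef] using add_nonneg h1 h2
  have hA0 : 0 ≤ A := by
    rw [hA]; exact Finset.sum_nonneg fun j _ => norm_nonneg _
  -- column sums of the transition matrices
  have hcol : ∀ m s : ℕ, ∀ j, ∑ i, transMat P m s i j = 1 := by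
    intro m s j
    refine list_prod_colsum _ ?_ j
    intro M hM
    simp only [List.mem_map, List.mem_range] at hM
    obtain ⟨k, -, rfl⟩ := hM
    exact hPcol _
  -- the identity matrix bound
  have hIdbd : ∀ i : Fin N, ∑ j, |(1 : Matrix (Fin N) (Fin N) ℝ) i j - 1/(N:ℝ)| ≤ 2 := by
    intro i
    have hsplit := Finset.add_sum_erase Finset.univ
      (fun j => |(1 : Matrix (Fin N) (Fin N) ℝ) i j - 1/(N:ℝ)|) (Finset.mem_univ i)
    rw [← hsplit]
    have h1 : |(1 : Matrix (Fin N) (Fin N) ℝ) i i - 1/(N:ℝ)| ≤ 1 := by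
      rw [Matrix.one_apply_eq]
      rw [abs_of_nonneg (by rw [sub_nonneg]; rw [div_le_one hNpos]; linarith)]
      have : (0:ℝ) < 1/(N:ℝ) := by positivity
      linarith
    have h2 : ∑ j ∈ Finset.univ.erase i,
        |(1 : Matrix (Fin N) (Fin N) ℝ) i j - 1/(N:ℝ)| ≤ 1 := by
      have heach : ∀ j ∈ Finset.univ.erase i,
          |(1 : Matrix (Fin N) (Fin N) ℝ) i j - 1/(N:ℝ)| = 1/(N:ℝ) := by
        intro j hj
        rw [Matrix.one_apply_ne' (Finset.ne_of_mem_erase hj), zero_sub, abs_neg,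
          abs_of_nonneg (by positivity)]
      rw [Finset.sum_congr rfl heach, Finset.sum_const]
      have hcard : (Finset.univ.erase i).card = N - 1 := by
        simp [Finset.card_erase_of_mem]
      rw [hcard, nsmul_eq_mul]
      have : ((N - 1 : ℕ) : ℝ) ≤ (N:ℝ) := by
        exact_mod_cast Nat.cast_le.mpr (Nat.sub_le N 1)
      calc ((N - 1 : ℕ) : ℝ) * (1/(N:ℝ)) ≤ (N:ℝ) * (1/(N:ℝ)) := by
            apply mul_le_mul_of_nonneg_right this (by positivity)
        _ = 1 := by field_simp
    linarith
  -- the key per-agent bound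
  have key : ∀ t : ℕ, 1 ≤ t → ∀ i : Fin N, ‖x i t - xbar t‖ ≤
      ω * γ ^ (t-1) * A
        + (∑ s ∈ Finset.Icc 1 (t-1), (N:ℝ) * (ω * γ ^ (t-1-s)) * D (s-1))
        + 2 * D (t-1) := by
    intro t ht i
    -- expression for xbar
    have hxbar' : xbar t = (∑ s ∈ Finset.Icc 1 t, ∑ j, (1/(N:ℝ)) • d j (s-1))
        + ∑ j, (1/(N:ℝ)) • x j 0 := by
      rw [hxbar]
      have hsum : ∑ i', x i' t
          = (∑ s ∈ Finset.Icc 1 t, ∑ j,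
              ((∑ i', transMat P (t-1) s i' j) • d j (s-1)))
            + ∑ j, (∑ i', transMat P (t-1) 0 i' j) • x j 0 := by
        rw [Finset.sum_congr rfl (fun i' _ => hx i' t ht)]
        rw [Finset.sum_add_distrib]
        congr 1
        · rw [Finset.sum_comm]
          refine Finset.sum_congr rfl fun s _ => ?_
          rw [Finset.sum_comm]
          refine Finset.sum_congr rfl fun j _ => ?_
          rw [Finset.sum_smul]
        · rw [Finset.sum_comm]
          refine Finset.sum_congr rfl fun j _ => ?_
          rw [Finset.sum_smul]
      rw [hsum]
      simp only [hcol, one_smul]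
      rw [smul_add]
      simp only [Finset.smul_sum]
    have hdiff : x i t - xbar t
        = (∑ s ∈ Finset.Icc 1 t, ∑ j,
            (transMat P (t-1) s i j - 1/(N:ℝ)) • d j (s-1))
          + ∑ j, (transMat P (t-1) 0 i j - 1/(N:ℝ)) • x j 0 := by
      rw [hx i t ht, hxbar']
      simp only [sub_smul, Finset.sum_sub_distrib]
      abel
    -- norm bound
    have hnorm : ‖x i t - xbar t‖ ≤
        (∑ s ∈ Finset.Icc 1 t, ∑ j,
            |transMat P (t-1) s i j - 1/(N:ℝ)| * ‖d j (s-1)‖)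
          + ∑ j, |transMat P (t-1) 0 i j - 1/(N:ℝ)| * ‖x j 0‖ := by
      rw [hdiff]
      refine le_trans (norm_add_le _ _) (add_le_add ?_ ?_)
      · refine le_trans (norm_sum_le _ _) (Finset.sum_le_sum fun s _ => ?_)
        refine le_trans (norm_sum_le _ _) (Finset.sum_le_sum fun j _ => ?_)
        rw [norm_smul, Real.norm_eq_abs]
      · refine le_trans (norm_sum_le _ _) (Finset.sum_le_sum fun j _ => ?_)
        rw [norm_smul, Real.norm_eq_abs]
    -- split off the top term s = t
    have htsplit : Finset.Icc 1 t = Finset.Icc 1 ((t-1)+1) := by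
      congr 1; omega
    have hId : transMat P (t-1) t = 1 := by
      have : (t-1) + 1 - t = 0 := by omega
      simp [transMat, this]
    have hbound1 : (∑ s ∈ Finset.Icc 1 t, ∑ j,
        |transMat P (t-1) s i j - 1/(N:ℝ)| * ‖d j (s-1)‖) ≤
        (∑ s ∈ Finset.Icc 1 (t-1), (N:ℝ) * (ω * γ ^ (t-1-s)) * D (s-1))
          + 2 * D (t-1) := by
      rw [htsplit, Finset.sum_Icc_succ_top (by omega)]
      have hteq : t - 1 + 1 = t := by omega
      refine add_le_add ?_ ?_
      · refine Finset.sum_le_sum fun s hs => ?_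
        rw [Finset.mem_Icc] at hs
        have hbd : ∀ j : Fin N,
            |transMat P (t-1) s i j - 1/(N:ℝ)| * ‖d j (s-1)‖ ≤
              (ω * γ ^ (t-1-s)) * D (s-1) := by
          intro j
          have h1 := hPdecay (t-1) s hs.2 i j
          have h2 := hd j (s-1)
          exact mul_le_mul h1 h2 (norm_nonneg _)
            (by positivity)
        calc ∑ j, |transMat P (t-1) s i j - 1/(N:ℝ)| * ‖d j (s-1)‖
            ≤ ∑ _j : Fin N, (ω * γ ^ (t-1-s)) * D (s-1) :=
              Finset.sum_le_sum fun j _ => hbd j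
          _ = (N:ℝ) * (ω * γ ^ (t-1-s)) * D (s-1) := by
              rw [Finset.sum_const, Finset.card_univ, Fintype.card_fin,
                nsmul_eq_mul]; ring
      · rw [hteq, hId]
        calc ∑ j, |(1 : Matrix (Fin N) (Fin N) ℝ) i j - 1/(N:ℝ)| * ‖d j (t-1)‖
            ≤ ∑ j, |(1 : Matrix (Fin N) (Fin N) ℝ) i j - 1/(N:ℝ)| * D (t-1) := by
              refine Finset.sum_le_sum fun j _ => ?_
              exact mul_le_mul_of_nonneg_left (hd j (t-1)) (abs_nonneg _)
          _ = (∑ j, |(1 : Matrix (Fin N) (Fin N) ℝ) i j - 1/(N:ℝ)|) * D (t-1) := by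
              rw [Finset.sum_mul]
          _ ≤ 2 * D (t-1) :=
              mul_le_mul_of_nonneg_right (hIdbd i) (hD0 _)
    have hbound2 : (∑ j, |transMat P (t-1) 0 i j - 1/(N:ℝ)| * ‖x j 0‖) ≤
        ω * γ ^ (t-1) * A := by
      rw [hA, Finset.mul_sum]
      refine Finset.sum_le_sum fun j _ => ?_
      have h1 := hPdecay (t-1) 0 (Nat.zero_le _) i j
      rw [Nat.sub_zero] at h1
      exact mul_le_mul_of_nonneg_right h1 (norm_nonneg _)
    calc ‖x i t - xbar t‖ ≤ _ := hnorm
      _ ≤ ((∑ s ∈ Finset.Icc 1 (t-1), (N:ℝ) * (ω * γ ^ (t-1-s)) * D (s-1))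
            + 2 * D (t-1)) + ω * γ ^ (t-1) * A := add_le_add hbound1 hbound2
      _ = _ := by ring
  -- the aggregated per-time bound
  set c : ℕ → ℝ := fun t => (N:ℝ) * (ω * γ ^ (t-1) * A
      + (∑ s ∈ Finset.Icc 1 (t-1), (N:ℝ) * (ω * γ ^ (t-1-s)) * D (s-1))
      + 2 * D (t-1)) with hcdef
  have hkey_sum : ∀ t : ℕ, 1 ≤ t → ∑ i, ‖x i t - xbar t‖ ≤ c t := by
    intro t ht
    calc ∑ i, ‖x i t - xbar t‖
        ≤ ∑ _i : Fin N, (ω * γ ^ (t-1) * A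
            + (∑ s ∈ Finset.Icc 1 (t-1), (N:ℝ) * (ω * γ ^ (t-1-s)) * D (s-1))
            + 2 * D (t-1)) := Finset.sum_le_sum fun i _ => key t ht i
      _ = c t := by
          rw [Finset.sum_const, Finset.card_univ, Fintype.card_fin, nsmul_eq_mul]
  have hkey_single : ∀ t : ℕ, 1 ≤ t → ∀ j : Fin N, (N:ℝ) * ‖x j t - xbar t‖ ≤ c t := by
    intro t ht j
    exact mul_le_mul_of_nonneg_left (key t ht j) (le_of_lt hNpos)
  -- sum of c over t
  have hc_sum : ∑ t ∈ Finset.Icc 1 T, c t ≤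
      ((N:ℝ) * ω / (1 - γ)) * A + B * ∑ t ∈ Finset.range (T+1), D t := by
    have hsplit : ∑ t ∈ Finset.Icc 1 T, c t
        = (∑ t ∈ Finset.Icc 1 T, (N:ℝ) * (ω * γ ^ (t-1) * A))
          + (∑ t ∈ Finset.Icc 1 T, (N:ℝ) *
              (∑ s ∈ Finset.Icc 1 (t-1), (N:ℝ) * (ω * γ ^ (t-1-s)) * D (s-1)))
          + ∑ t ∈ Finset.Icc 1 T, (N:ℝ) * (2 * D (t-1)) := by
      simp only [hcdef, mul_add, Finset.sum_add_distrib]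
    -- term (a)
    have ha : (∑ t ∈ Finset.Icc 1 T, (N:ℝ) * (ω * γ ^ (t-1) * A)) ≤
        ((N:ℝ) * ω / (1 - γ)) * A := by
      have h1 : (∑ t ∈ Finset.Icc 1 T, (N:ℝ) * (ω * γ ^ (t-1) * A))
          = (N:ℝ) * ω * A * ∑ t ∈ Finset.Icc 1 T, γ ^ (t-1) := by
        rw [Finset.mul_sum]; exact Finset.sum_congr rfl fun t _ => by ring
      have h2 : ∑ t ∈ Finset.Icc 1 T, γ ^ (t-1) = ∑ k ∈ Finset.range T, γ ^ k := by
        rw [← Finset.Ico_add_one_right_eq_Icc, Finset.sum_Ico_eq_sum_range]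
        simp
      rw [h1, h2]
      have h3 := geom_sum_le_aux hγ0 hγ1 T
      calc (N:ℝ) * ω * A * ∑ k ∈ Finset.range T, γ ^ k
          ≤ (N:ℝ) * ω * A * (1 / (1 - γ)) := by
            apply mul_le_mul_of_nonneg_left h3 (by positivity)
        _ = ((N:ℝ) * ω / (1 - γ)) * A := by ring
    -- term (b)
    have hb : (∑ t ∈ Finset.Icc 1 T, (N:ℝ) *
          (∑ s ∈ Finset.Icc 1 (t-1), (N:ℝ) * (ω * γ ^ (t-1-s)) * D (s-1))) ≤
        ((N:ℝ)^2 * ω / (1 - γ)) * ∑ t ∈ Finset.range (T+1), D t := by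
      have h1 : (∑ t ∈ Finset.Icc 1 T, (N:ℝ) *
            (∑ s ∈ Finset.Icc 1 (t-1), (N:ℝ) * (ω * γ ^ (t-1-s)) * D (s-1)))
          = (N:ℝ)^2 * ω * ∑ t ∈ Finset.Icc 1 T,
              ∑ s ∈ Finset.Icc 1 (t-1), γ ^ (t-1-s) * D (s-1) := by
        rw [Finset.mul_sum]
        refine Finset.sum_congr rfl fun t _ => ?_
        rw [Finset.mul_sum, Finset.mul_sum]
        exact Finset.sum_congr rfl fun s _ => by ring
      have hswap : ∑ t ∈ Finset.Icc 1 T, ∑ s ∈ Finset.Icc 1 (t-1), γ ^ (t-1-s) * D (s-1)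
          = ∑ s ∈ Finset.Icc 1 T, ∑ t ∈ Finset.Icc (s+1) T, γ ^ (t-1-s) * D (s-1) := by
        refine Finset.sum_comm' ?_
        intro t s
        simp only [Finset.mem_Icc]
        omega
      have hinner : ∀ s, 1 ≤ s → (∑ t ∈ Finset.Icc (s+1) T, γ ^ (t-1-s) * D (s-1))
          ≤ (1/(1-γ)) * D (s-1) := by
        intro s hs
        have h2 : ∑ t ∈ Finset.Icc (s+1) T, γ ^ (t-1-s)
            = ∑ k ∈ Finset.range (T + 1 - (s+1)), γ ^ k := by
          rw [← Finset.Ico_add_one_right_eq_Icc, Finset.sum_Ico_eq_sum_range]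
          refine Finset.sum_congr rfl fun k _ => ?_
          congr 1
          omega
        have h3 : ∑ t ∈ Finset.Icc (s+1) T, γ ^ (t-1-s) * D (s-1)
            = (∑ t ∈ Finset.Icc (s+1) T, γ ^ (t-1-s)) * D (s-1) := by
          rw [Finset.sum_mul]
        rw [h3, h2]
        exact mul_le_mul_of_nonneg_right
          (geom_sum_le_aux hγ0 hγ1 _) (hD0 _)
      have h4 : ∑ s ∈ Finset.Icc 1 T, (1/(1-γ)) * D (s-1)
          ≤ (1/(1-γ)) * ∑ t ∈ Finset.range (T+1), D t := by
        have h5 : ∑ s ∈ Finset.Icc 1 T, (1/(1-γ)) * D (s-1)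
            = (1/(1-γ)) * ∑ k ∈ Finset.range T, D k := by
          rw [Finset.mul_sum, ← Finset.Ico_add_one_right_eq_Icc, Finset.sum_Ico_eq_sum_range]
          simp
        rw [h5]
        apply mul_le_mul_of_nonneg_left _ (by positivity)
        exact Finset.sum_le_sum_of_subset_of_nonneg
          (Finset.range_subset_range.mpr (by omega)) (fun k _ _ => hD0 k)
      rw [h1, hswap]
      calc (N:ℝ)^2 * ω * ∑ s ∈ Finset.Icc 1 T,
              ∑ t ∈ Finset.Icc (s+1) T, γ ^ (t-1-s) * D (s-1)
          ≤ (N:ℝ)^2 * ω * ∑ s ∈ Finset.Icc 1 T, (1/(1-γ)) * D (s-1) := by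
            apply mul_le_mul_of_nonneg_left _ (by positivity)
            refine Finset.sum_le_sum fun s hs => ?_
            exact hinner s (Finset.mem_Icc.mp hs).1
        _ ≤ (N:ℝ)^2 * ω * ((1/(1-γ)) * ∑ t ∈ Finset.range (T+1), D t) := by
            apply mul_le_mul_of_nonneg_left h4 (by positivity)
        _ = ((N:ℝ)^2 * ω / (1 - γ)) * ∑ t ∈ Finset.range (T+1), D t := by ring
    -- term (c)
    have hc : (∑ t ∈ Finset.Icc 1 T, (N:ℝ) * (2 * D (t-1))) ≤
        2 * (N:ℝ) * ∑ t ∈ Finset.range (T+1), D t := by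
      have h1 : ∑ t ∈ Finset.Icc 1 T, (N:ℝ) * (2 * D (t-1))
          = 2 * (N:ℝ) * ∑ k ∈ Finset.range T, D k := by
        rw [Finset.mul_sum, ← Finset.Ico_add_one_right_eq_Icc, Finset.sum_Ico_eq_sum_range]
        refine Finset.sum_congr rfl fun k _ => ?_
        simp; ring
      rw [h1]
      apply mul_le_mul_of_nonneg_left _ (by positivity)
      exact Finset.sum_le_sum_of_subset_of_nonneg
        (Finset.range_subset_range.mpr (by omega)) (fun k _ _ => hD0 k)
    rw [hsplit, hB]
    have hexp : (2 * (N:ℝ) + (N:ℝ) ^ 2 * ω / (1 - γ)) * ∑ t ∈ Finset.range (T+1), D t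
        = ((N:ℝ)^2 * ω / (1 - γ)) * (∑ t ∈ Finset.range (T+1), D t)
          + 2 * (N:ℝ) * ∑ t ∈ Finset.range (T+1), D t := by ring
    push_cast
    linarith [ha, hb, hc]
  constructor
  · calc ∑ t ∈ Finset.Icc 1 T, ∑ i, ‖x i t - xbar t‖
        ≤ ∑ t ∈ Finset.Icc 1 T, c t := by
          refine Finset.sum_le_sum fun t ht => ?_
          exact hkey_sum t (Finset.mem_Icc.mp ht).1
      _ ≤ _ := hc_sum
  · intro j
    have hstep : ∀ t : ℕ, 1 ≤ t → ∑ i, ‖x i t - x j t‖ ≤ 2 * c t := by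
      intro t ht
      have htri : ∀ i : Fin N, ‖x i t - x j t‖ ≤ ‖x i t - xbar t‖ + ‖x j t - xbar t‖ := by
        intro i
        calc ‖x i t - x j t‖ = ‖(x i t - xbar t) - (x j t - xbar t)‖ := by
              congr 1; abel
          _ ≤ ‖x i t - xbar t‖ + ‖x j t - xbar t‖ := norm_sub_le _ _
      calc ∑ i, ‖x i t - x j t‖
          ≤ ∑ i, (‖x i t - xbar t‖ + ‖x j t - xbar t‖) :=
            Finset.sum_le_sum fun i _ => htri i
        _ = (∑ i, ‖x i t - xbar t‖) + (N:ℝ) * ‖x j t - xbar t‖ := by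
            rw [Finset.sum_add_distrib, Finset.sum_const, Finset.card_univ,
              Fintype.card_fin, nsmul_eq_mul]
        _ ≤ c t + c t := add_le_add (hkey_sum t ht) (hkey_single t ht j)
        _ = 2 * c t := by ring
    calc ∑ t ∈ Finset.Icc 1 T, ∑ i, ‖x i t - x j t‖
        ≤ ∑ t ∈ Finset.Icc 1 T, 2 * c t := by
          refine Finset.sum_le_sum fun t ht => ?_
          exact hstep t (Finset.mem_Icc.mp ht).1
      _ = 2 * ∑ t ∈ Finset.Icc 1 T, c t := by rw [Finset.mul_sum]
      _ ≤ 2 * (((N:ℝ) * ω / (1 - γ)) * A + B * ∑ t ∈ Finset.range (T+1), D t) := by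
          linarith [hc_sum]
      _ = (2 * (N:ℝ) * ω / (1 - γ)) * A
            + 2 * B * ∑ t ∈ Finset.range (T+1), D t := by ring
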